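/- For any x ∈ X and γ > 0, let x⁺ = P_x(γF(x)) and φ_γ(x) = F(x) − F(x⁺) + (1/γ)(∇ω(x⁺) − ∇ω(x)). Then the generalized gap function satisfies g̃(x⁺, φ_γ(x)) := sup_{z∈X} ⟨F(x⁺) + φ_γ(x), x⁺ − z⟩ ≤ 0. -/

import Mathlib

open scoped InnerProductSpace

section
variable {n : ℕ}

lemma aux_min_grad {f : EuclideanSpace ℝ (Fin n) → ℝ}
    {g xp z : EuclideanSpace ℝ (Fin n)} {X : Set (EuclideanSpace ℝ (Fin n))}
    (hXcv : Convex ℝ X) (hxpX : xp ∈ X) (hz : z ∈ X)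
    (hmin : IsMinOn f X xp) (hgrad : HasGradientAt f g xp) :
    0 ≤ ⟪g, z - xp⟫_ℝ := by
  set d := z - xp with hd
  have hline : ∀ t : ℝ, HasDerivAt (fun t : ℝ => xp + t • d) d t := by
    intro t
    simpa using ((hasDerivAt_id t).smul_const d).const_add xp
  have hg : HasDerivAt (fun t : ℝ => f (xp + t • d)) ⟪g, d⟫_ℝ 0 := by
    have h1 : HasFDerivAt f ((InnerProductSpace.toDual ℝ (EuclideanSpace ℝ (Fin n))) g)
        (xp + (0:ℝ) • d) := by simpa using hgrad.hasFDerivAt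
    have := h1.comp_hasDerivAt 0 (hline 0)
    simpa [Function.comp_def] using this
  have hmem : ∀ t ∈ Set.Icc (0:ℝ) 1, xp + t • d ∈ X := by
    intro t ht
    have : xp + t • d = (1 - t) • xp + t • z := by
      simp [hd, smul_sub, sub_smul]; abel
    rw [this]
    exact hXcv hxpX hz (by linarith [ht.1, ht.2]) ht.1 (by ring)
  have hge : ∀ t ∈ Set.Icc (0:ℝ) 1, f xp ≤ f (xp + t • d) := fun t ht =>
    hmin (hmem t ht)
  -- slope argument
  have hDW : HasDerivWithinAt (fun t : ℝ => f (xp + t • d)) ⟪g, d⟫_ℝ (Set.Ioi 0) 0 :=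
    hg.hasDerivWithinAt
  rw [hasDerivWithinAt_iff_tendsto_slope] at hDW
  have hEv : ∀ᶠ t in nhdsWithin (0:ℝ) (Set.Ioi 0 \ {0}),
      0 ≤ slope (fun t : ℝ => f (xp + t • d)) 0 t := by
    have hIoc : Set.Ioc (0:ℝ) 1 ∈ nhdsWithin (0:ℝ) (Set.Ioi 0 \ {0}) := by
      rw [Set.diff_singleton_eq_self (by simp)]
      exact Ioc_mem_nhdsGT one_pos
    filter_upwards [hIoc] with t ht
    have h0 : f xp ≤ f (xp + t • d) := hge t ⟨le_of_lt ht.1, ht.2⟩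
    have : slope (fun t : ℝ => f (xp + t • d)) 0 t
        = (f (xp + t • d) - f (xp + (0:ℝ) • d)) / t := by
      simp [slope_def_field, div_eq_inv_mul]
    rw [this]
    apply div_nonneg _ (le_of_lt ht.1)
    simpa using h0
  haveI hne : (nhdsWithin (0:ℝ) (Set.Ioi 0 \ {0})).NeBot := by
    rw [Set.diff_singleton_eq_self (by simp)]
    exact nhdsGT_neBot (0:ℝ)
  exact ge_of_tendsto hDW hEv
end

/-- The Bregman distance `V(x,z) = ω(z) − ω(x) − ⟨∇ω(x), z−x⟩`. -/
noncomputable def bregman {n : ℕ} (ω : EuclideanSpace ℝ (Fin n) → ℝ)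
    (gω : EuclideanSpace ℝ (Fin n) → EuclideanSpace ℝ (Fin n))
    (x z : EuclideanSpace ℝ (Fin n)) : ℝ :=
  ω z - ω x - ⟪gω x, z - x⟫_ℝ

/-- For `x⁺ = P_x(γ F(x))` and `φ_γ(x) = F(x) − F(x⁺) + (1/γ)(∇ω(x⁺) − ∇ω(x))`, the
generalized gap function satisfies `g̃(x⁺, φ_γ(x)) = sup_{z∈X} ⟨F(x⁺)+φ_γ(x), x⁺−z⟩ ≤ 0`. -/
theorem stmt7 {n : ℕ} (X Xo : Set (EuclideanSpace ℝ (Fin n)))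
    (hXne : X.Nonempty) (hXcl : IsClosed X) (hXcv : Convex ℝ X) (hXoX : Xo ⊆ X)
    (F : EuclideanSpace ℝ (Fin n) → EuclideanSpace ℝ (Fin n))
    (hFct : ContinuousOn F X)
    (α : ℝ) (hα : 0 < α)
    (ω : EuclideanSpace ℝ (Fin n) → ℝ)
    (gω : EuclideanSpace ℝ (Fin n) → EuclideanSpace ℝ (Fin n))
    (hωcv : ConvexOn ℝ X ω)
    (hgrad : ∀ y ∈ Xo, HasGradientAt ω (gω y) y)
    (x : EuclideanSpace ℝ (Fin n)) (hx : x ∈ X) (hxo : x ∈ Xo)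
    (γ : ℝ) (hγ : 0 < γ)
    (xp : EuclideanSpace ℝ (Fin n)) (hxpX : xp ∈ X) (hxpo : xp ∈ Xo)
    (hxp : IsMinOn (fun z => ⟪γ • F x, z⟫_ℝ + bregman ω gω x z) X xp) :
    ∀ z ∈ X,
      ⟪F xp + (F x - F xp + γ⁻¹ • (gω xp - gω x)), xp - z⟫_ℝ ≤ 0 := by
  intro z hz
  have hinner : ∀ (c p : EuclideanSpace ℝ (Fin n)),
      HasFDerivAt (fun w : EuclideanSpace ℝ (Fin n) => ⟪c, w⟫_ℝ)
      (InnerProductSpace.toDual ℝ (EuclideanSpace ℝ (Fin n)) c) p := by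
    intro c p
    have h := (InnerProductSpace.toDual ℝ (EuclideanSpace ℝ (Fin n)) c).hasFDerivAt (x := p)
    have heq : (fun w : EuclideanSpace ℝ (Fin n) => ⟪c, w⟫_ℝ)
        = ⇑(InnerProductSpace.toDual ℝ (EuclideanSpace ℝ (Fin n)) c) := by
      funext w; rw [InnerProductSpace.toDual_apply_apply]
    rw [heq]; exact h
  have hω := (hgrad xp hxpo).hasFDerivAt
  have h4 : HasFDerivAt (fun w : EuclideanSpace ℝ (Fin n) => w - x)
      (ContinuousLinearMap.id ℝ (EuclideanSpace ℝ (Fin n))) xp := by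
    simpa using (hasFDerivAt_id xp).sub_const x
  have h3 : HasFDerivAt (fun w : EuclideanSpace ℝ (Fin n) => ⟪gω x, w - x⟫_ℝ)
      (InnerProductSpace.toDual ℝ (EuclideanSpace ℝ (Fin n)) (gω x)) xp := by
    have := (hinner (gω x) (xp - x)).comp xp h4
    simpa [Function.comp_def] using this
  have h2 : HasFDerivAt (fun w : EuclideanSpace ℝ (Fin n) => bregman ω gω x w)
      (InnerProductSpace.toDual ℝ (EuclideanSpace ℝ (Fin n)) (gω xp)
        - InnerProductSpace.toDual ℝ (EuclideanSpace ℝ (Fin n)) (gω x)) xp := by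
    have := (hω.sub_const (ω x)).sub h3
    exact this
  have hf : HasGradientAt (fun w => ⟪γ • F x, w⟫_ℝ + bregman ω gω x w)
      (γ • F x + (gω xp - gω x)) xp := by
    rw [hasGradientAt_iff_hasFDerivAt]
    have := (hinner (γ • F x) xp).add h2
    rw [map_add, map_sub]
    exact this
  have key := aux_min_grad hXcv hxpX hz hxp hf
  have hvec : F xp + (F x - F xp + γ⁻¹ • (gω xp - gω x))
      = γ⁻¹ • (γ • F x + (gω xp - gω x)) := by
    rw [smul_add, smul_smul, inv_mul_cancel₀ hγ.ne', one_smul]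
    abel
  rw [hvec, real_inner_smul_left]
  have hneg : ⟪γ • F x + (gω xp - gω x), xp - z⟫_ℝ
      = -⟪γ • F x + (gω xp - gω x), z - xp⟫_ℝ := by
    rw [← inner_neg_right]; congr 1; abel
  rw [hneg]
  have h0 : (0:ℝ) ≤ γ⁻¹ := inv_nonneg.mpr hγ.le
  nlinarith [key]
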